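/- Let n ≥ 2, s ≥ 1 and p = 2s. Suppose that for every choice of points t_i ∈ ((i-1)/N, i/N], 1 ≤ i ≤ N, every ball B_R ⊂ ℝⁿ of radius R ≥ Nⁿ and ε > 0, the discrete restriction estimate ( |B_R|^{-1} ∫ |Σ_{i=1}^N e(x·(t_i, t_i², ..., t_iⁿ))|^{2s} w_{B_R} )^{1/(2s)} ≤ C_ε (N^{1/2+ε} + N^{1 - n(n+1)/(4s) + ε}) holds. Then for any real numbers X_1, ..., X_N with i-1 < X_i ≤ i, the number J̃_{s,n} of 2s-tuples from {X_1,...,X_N} satisfying |Σ_{j=1}^s X_{a_j}^i − Σ_{j=1}^s X_{b_j}^i| ≤ N^{i-n} for all 1 ≤ i ≤ n obeys J̃_{s,n} ≤ C'_ε (N^{s+ε} + N^{2s − n(n+1)/2 + ε}). -/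

import Mathlib

open MeasureTheory Metric

open MeasureTheory Metric Complex

noncomputable def vinDelta (n N s : ℕ) (t : Fin N → ℝ)
    (p : (Fin s → Fin N) × (Fin s → Fin N)) : EuclideanSpace ℝ (Fin n) :=
  WithLp.toLp 2 (fun j : Fin n => (∑ k, t (p.1 k) ^ (j.1 + 1)) - (∑ k, t (p.2 k) ^ (j.1 + 1)))

lemma vin_expand (n s N : ℕ) (t : Fin N → ℝ) (x : EuclideanSpace ℝ (Fin n)) :
    ((‖∑ i : Fin N, Complex.exp (2 * (Real.pi : ℂ) * Complex.I *
        ((∑ j : Fin n, x j * t i ^ (j.1 + 1) : ℝ) : ℂ))‖ ^ (2 * s) : ℝ) : ℂ)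
    = ∑ p : (Fin s → Fin N) × (Fin s → Fin N),
        Complex.exp (2 * (Real.pi : ℂ) * Complex.I *
          ((∑ j : Fin n, x j * vinDelta n N s t p j : ℝ) : ℂ)) := by
  set θ : Fin N → ℝ := fun i => (∑ j : Fin n, x j * t i ^ (j.1 + 1)) with hθ
  set z : Fin N → ℂ := fun i => Complex.exp (2 * (Real.pi : ℂ) * Complex.I * (θ i : ℂ)) with hz
  set w : ℂ := ∑ i, z i with hw
  have h1 : ((‖w‖ ^ (2 * s) : ℝ) : ℂ) = w ^ s * (starRingEnd ℂ) w ^ s := by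
    rw [pow_mul]
    push_cast
    rw [← Complex.mul_conj', mul_pow]
  rw [h1]
  have hconj : (starRingEnd ℂ) w = ∑ i, Complex.exp (2 * (Real.pi : ℂ) * Complex.I * (-θ i : ℂ)) := by
    rw [hw, map_sum]
    refine Finset.sum_congr rfl fun i _ => ?_
    rw [hz, ← Complex.exp_conj]
    congr 1
    rw [map_mul, map_mul, map_mul]
    simp only [Complex.conj_I, Complex.conj_ofReal, map_ofNat]
    ring
  rw [hconj, hw, Fintype.sum_pow, Fintype.sum_pow, Fintype.sum_prod_type, Finset.sum_mul_sum]
  refine Finset.sum_congr rfl fun a _ => Finset.sum_congr rfl fun b _ => ?_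
  rw [← Complex.exp_sum, ← Complex.exp_sum, ← Complex.exp_add]
  congr 1
  rw [← Finset.sum_add_distrib]
  simp_rw [← mul_add]
  rw [← Finset.mul_sum]
  congr 1
  have : ∀ k : Fin s, (θ (a k) : ℂ) + (-θ (b k) : ℂ) = ((θ (a k) - θ (b k) : ℝ) : ℂ) := by
    intro k; push_cast; ring
  simp_rw [this]
  rw [← Complex.ofReal_sum]
  congr 1
  simp only [hθ, vinDelta, PiLp.toLp_apply]
  simp only [Finset.sum_sub_distrib, mul_sub, Finset.mul_sum]
  rw [Finset.sum_comm]
  congr 1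
  rw [Finset.sum_comm]

open scoped RealInnerProductSpace in
lemma vin_gauss (n : ℕ) {R : ℝ} (hR : 0 < R) (Δ : EuclideanSpace ℝ (Fin n)) :
    ∫ x : EuclideanSpace ℝ (Fin n),
      Complex.exp (2 * (Real.pi : ℂ) * Complex.I * ((∑ j : Fin n, x j * Δ j : ℝ) : ℂ)) *
        (Real.exp (-Real.pi * ‖x‖ ^ 2 / R ^ 2) : ℂ)
    = ((R ^ n * Real.exp (-Real.pi * R ^ 2 * ‖Δ‖ ^ 2) : ℝ) : ℂ) := by
  have hb : (0 : ℝ) < ((Real.pi / R ^ 2 : ℝ) : ℂ).re := by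
    simp only [Complex.ofReal_re]
    positivity
  have key := GaussianFourier.integral_cexp_neg_mul_sq_norm_add_of_euclideanSpace
    (b := ((Real.pi / R ^ 2 : ℝ) : ℂ)) hb (2 * (Real.pi : ℂ) * Complex.I) Δ
  have heq : ∀ x : EuclideanSpace ℝ (Fin n),
      Complex.exp (2 * (Real.pi : ℂ) * Complex.I * ((∑ j : Fin n, x j * Δ j : ℝ) : ℂ)) *
        (Real.exp (-Real.pi * ‖x‖ ^ 2 / R ^ 2) : ℂ)
      = Complex.exp (-((Real.pi / R ^ 2 : ℝ) : ℂ) * ‖x‖ ^ 2 +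
          (2 * (Real.pi : ℂ) * Complex.I) * (inner ℝ Δ x : ℝ)) := by
    intro x
    rw [Complex.ofReal_exp, ← Complex.exp_add]
    congr 1
    have hinner : (inner ℝ Δ x : ℝ) = ∑ j : Fin n, x j * Δ j := by
      rw [PiLp.inner_apply]
      exact Finset.sum_congr rfl fun j _ => by simp [mul_comm]
    rw [hinner]
    push_cast
    ring
  rw [MeasureTheory.integral_congr_ae (Filter.Eventually.of_forall heq), key]
  have hcard : (Fintype.card (Fin n) : ℂ) = (n : ℂ) := by simp
  have h1 : ((Real.pi : ℂ) / ((Real.pi / R ^ 2 : ℝ) : ℂ)) = ((R ^ 2 : ℝ) : ℂ) := by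
    have hπ : (Real.pi : ℂ) ≠ 0 := Complex.ofReal_ne_zero.mpr Real.pi_ne_zero
    have hR' : (R : ℂ) ≠ 0 := Complex.ofReal_ne_zero.mpr hR.ne'
    push_cast
    field_simp
  rw [h1]
  have h2 : ((R ^ 2 : ℝ) : ℂ) ^ ((Fintype.card (Fin n) : ℂ) / 2) = ((R ^ n : ℝ) : ℂ) := by
    rw [show ((Fintype.card (Fin n) : ℂ) / 2) = (((n / 2 : ℝ) : ℂ)) by
      rw [Fintype.card_fin]; push_cast; ring]
    rw [← Complex.ofReal_cpow (by positivity)]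
    congr 1
    rw [← Real.rpow_natCast R 2, ← Real.rpow_mul hR.le,
      show (((2:ℕ):ℝ) * ((n : ℝ) / 2)) = (n : ℝ) by push_cast; ring, Real.rpow_natCast]
  rw [h2]
  have h3 : (2 * (Real.pi : ℂ) * Complex.I) ^ 2 * (‖Δ‖ : ℂ) ^ 2 /
      (4 * ((Real.pi / R ^ 2 : ℝ) : ℂ)) = ((-Real.pi * R ^ 2 * ‖Δ‖ ^ 2 : ℝ) : ℂ) := by
    have hπ : (Real.pi : ℂ) ≠ 0 := Complex.ofReal_ne_zero.mpr Real.pi_ne_zero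
    have hR' : (R : ℂ) ≠ 0 := Complex.ofReal_ne_zero.mpr hR.ne'
    push_cast
    rw [mul_pow, mul_pow, Complex.I_sq]
    field_simp
    ring
  rw [h3, ← Complex.ofReal_exp, ← Complex.ofReal_mul]

lemma vin_identity (n s N : ℕ) (t : Fin N → ℝ) {R : ℝ} (hR : 0 < R) :
    ∫ x : EuclideanSpace ℝ (Fin n),
      ‖∑ i : Fin N, Complex.exp (2 * (Real.pi : ℂ) * Complex.I *
        ((∑ j : Fin n, x j * t i ^ (j.1 + 1) : ℝ) : ℂ))‖ ^ (2 * s) *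
        Real.exp (-Real.pi * ‖x‖ ^ 2 / R ^ 2)
    = ∑ p : (Fin s → Fin N) × (Fin s → Fin N),
        R ^ n * Real.exp (-Real.pi * R ^ 2 * ‖vinDelta n N s t p‖ ^ 2) := by
  have hb : (0 : ℝ) < ((Real.pi / R ^ 2 : ℝ) : ℂ).re := by
    simp only [Complex.ofReal_re]; positivity
  have hptwise : ∀ x : EuclideanSpace ℝ (Fin n),
      ((‖∑ i : Fin N, Complex.exp (2 * (Real.pi : ℂ) * Complex.I *
        ((∑ j : Fin n, x j * t i ^ (j.1 + 1) : ℝ) : ℂ))‖ ^ (2 * s) *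
        Real.exp (-Real.pi * ‖x‖ ^ 2 / R ^ 2) : ℝ) : ℂ)
      = ∑ p : (Fin s → Fin N) × (Fin s → Fin N),
          Complex.exp (2 * (Real.pi : ℂ) * Complex.I *
            ((∑ j : Fin n, x j * vinDelta n N s t p j : ℝ) : ℂ)) *
            (Real.exp (-Real.pi * ‖x‖ ^ 2 / R ^ 2) : ℂ) := by
    intro x
    rw [← Finset.sum_mul, ← vin_expand n s N t x, Complex.ofReal_mul]
  have hint : ∀ p : (Fin s → Fin N) × (Fin s → Fin N),
      MeasureTheory.Integrable (fun x : EuclideanSpace ℝ (Fin n) =>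
        Complex.exp (2 * (Real.pi : ℂ) * Complex.I *
          ((∑ j : Fin n, x j * vinDelta n N s t p j : ℝ) : ℂ)) *
          (Real.exp (-Real.pi * ‖x‖ ^ 2 / R ^ 2) : ℂ)) := by
    intro p
    have := GaussianFourier.integrable_cexp_neg_mul_sq_norm_add_of_euclideanSpace
      (b := ((Real.pi / R ^ 2 : ℝ) : ℂ)) hb (2 * (Real.pi : ℂ) * Complex.I) (vinDelta n N s t p)
    refine this.congr (Filter.Eventually.of_forall fun x => ?_)
    symm
    beta_reduce
    rw [Complex.ofReal_exp, ← Complex.exp_add]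
    congr 1
    have hinner : (inner ℝ (vinDelta n N s t p) x : ℝ)
        = ∑ j : Fin n, x j * vinDelta n N s t p j := by
      rw [PiLp.inner_apply]
      exact Finset.sum_congr rfl fun j _ => by simp [mul_comm]
    rw [hinner]
    push_cast
    ring
  have lhs_eq : ((∫ x : EuclideanSpace ℝ (Fin n),
      ‖∑ i : Fin N, Complex.exp (2 * (Real.pi : ℂ) * Complex.I *
        ((∑ j : Fin n, x j * t i ^ (j.1 + 1) : ℝ) : ℂ))‖ ^ (2 * s) *
        Real.exp (-Real.pi * ‖x‖ ^ 2 / R ^ 2) : ℝ) : ℂ)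
      = ∑ p : (Fin s → Fin N) × (Fin s → Fin N),
          ((R ^ n * Real.exp (-Real.pi * R ^ 2 * ‖vinDelta n N s t p‖ ^ 2) : ℝ) : ℂ) := by
    rw [show ((∫ x : EuclideanSpace ℝ (Fin n),
        ‖∑ i : Fin N, Complex.exp (2 * (Real.pi : ℂ) * Complex.I *
          ((∑ j : Fin n, x j * t i ^ (j.1 + 1) : ℝ) : ℂ))‖ ^ (2 * s) *
          Real.exp (-Real.pi * ‖x‖ ^ 2 / R ^ 2) : ℝ) : ℂ)
      = ∫ x : EuclideanSpace ℝ (Fin n),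
          ((‖∑ i : Fin N, Complex.exp (2 * (Real.pi : ℂ) * Complex.I *
            ((∑ j : Fin n, x j * t i ^ (j.1 + 1) : ℝ) : ℂ))‖ ^ (2 * s) *
            Real.exp (-Real.pi * ‖x‖ ^ 2 / R ^ 2) : ℝ) : ℂ)
      from integral_ofReal.symm]
    rw [MeasureTheory.integral_congr_ae (Filter.Eventually.of_forall hptwise)]
    rw [MeasureTheory.integral_finset_sum _ (fun p _ => hint p)]
    exact Finset.sum_congr rfl fun p _ => vin_gauss n hR (vinDelta n N s t p)
  have := lhs_eq.trans (by rw [← Complex.ofReal_sum])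
  exact_mod_cast this


lemma vin_exp_bound' {u m : ℝ} (hu : 0 ≤ u) (hm : 0 ≤ m) :
    Real.exp (-Real.pi * u ^ 2) * (1 + u) ^ m ≤ Real.exp (m ^ 2 / (4 * Real.pi)) := by
  have h1 : (0:ℝ) < 1 + u := by linarith
  have h2 : (1 + u) ^ m ≤ Real.exp (u * m) := by
    calc (1 + u) ^ m ≤ (Real.exp u) ^ m := by
          refine Real.rpow_le_rpow h1.le ?_ hm
          have := Real.add_one_le_exp u
          linarith
      _ = Real.exp (u * m) := (Real.exp_mul u m).symm
  calc Real.exp (-Real.pi * u ^ 2) * (1 + u) ^ m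
      ≤ Real.exp (-Real.pi * u ^ 2) * Real.exp (u * m) :=
        mul_le_mul_of_nonneg_left h2 (Real.exp_nonneg _)
    _ = Real.exp (-Real.pi * u ^ 2 + u * m) := (Real.exp_add _ _).symm
    _ ≤ Real.exp (m ^ 2 / (4 * Real.pi)) := by
        apply Real.exp_le_exp.mpr
        rw [le_div_iff₀ (by positivity : (0:ℝ) < 4 * Real.pi)]
        nlinarith [Real.pi_pos, sq_nonneg (2 * Real.pi * u - m)]

lemma vin_exp_bound {u m : ℝ} (hu : 0 ≤ u) (hm : 0 ≤ m) :
    Real.exp (-Real.pi * u ^ 2) ≤ Real.exp (m ^ 2 / (4 * Real.pi)) * (1 + u) ^ (-m) := by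
  have h1 : (0:ℝ) < 1 + u := by linarith
  rw [Real.rpow_neg h1.le, le_mul_inv_iff₀ (Real.rpow_pos_of_pos h1 m)]
  exact vin_exp_bound' hu hm


lemma vin_norm_exp (z : ℝ) :
    ‖Complex.exp (2 * (Real.pi : ℂ) * Complex.I * (z : ℂ))‖ = 1 := by
  rw [Complex.norm_exp]
  simp [Complex.mul_re, Complex.mul_im]

lemma vin_cont (n s N : ℕ) (t : Fin N → ℝ) :
    Continuous (fun x : EuclideanSpace ℝ (Fin n) =>
      ‖∑ i : Fin N, Complex.exp (2 * (Real.pi : ℂ) * Complex.I *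
        ((∑ j : Fin n, x j * t i ^ (j.1 + 1) : ℝ) : ℂ))‖ ^ (2 * s)) := by
  fun_prop

lemma vin_integrable (n s N : ℕ) (hn : 1 ≤ n) (t : Fin N → ℝ) {R : ℝ} (hR : 1 ≤ R) :
    MeasureTheory.Integrable (fun x : EuclideanSpace ℝ (Fin n) =>
      ‖∑ i : Fin N, Complex.exp (2 * (Real.pi : ℂ) * Complex.I *
        ((∑ j : Fin n, x j * t i ^ (j.1 + 1) : ℝ) : ℂ))‖ ^ (2 * s) *
        (1 + ‖x‖ / R) ^ (-(100 * (n : ℝ)))) := by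
  have hR0 : (0:ℝ) < R := lt_of_lt_of_le one_pos hR
  have hfin : ((Module.finrank ℝ (EuclideanSpace ℝ (Fin n)) : ℝ)) < 100 * n := by
    rw [finrank_euclideanSpace_fin]
    have : (1:ℝ) ≤ (n:ℝ) := by exact_mod_cast hn
    nlinarith
  have hg : MeasureTheory.Integrable (fun x : EuclideanSpace ℝ (Fin n) =>
      ((N:ℝ) ^ (2*s) * R ^ (100 * (n:ℝ))) * (1 + ‖x‖) ^ (-(100 * (n:ℝ)))) :=
    (integrable_one_add_norm hfin).const_mul _
  refine hg.mono' ?_ (Filter.Eventually.of_forall fun x => ?_)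
  · refine Continuous.aestronglyMeasurable ?_
    refine (vin_cont n s N t).mul ?_
    refine Continuous.rpow_const (by fun_prop) (fun x => Or.inl ?_)
    have : (0:ℝ) < 1 + ‖x‖ / R := by positivity
    exact this.ne'
  · have hb1 : (0:ℝ) < 1 + ‖x‖ := by positivity
    have hb2 : (0:ℝ) < (1 + ‖x‖) / R := by positivity
    have hnorm : ‖∑ i : Fin N, Complex.exp (2 * (Real.pi : ℂ) * Complex.I *
        ((∑ j : Fin n, x j * t i ^ (j.1 + 1) : ℝ) : ℂ))‖ ≤ (N:ℝ) := by
      refine (norm_sum_le _ _).trans ?_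
      rw [Finset.sum_congr rfl (fun i _ => vin_norm_exp _)]
      simp
    have hw1 : (1 + ‖x‖ / R) ^ (-(100 * (n:ℝ))) ≤ ((1 + ‖x‖) / R) ^ (-(100 * (n:ℝ))) := by
      refine Real.rpow_le_rpow_of_nonpos hb2 ?_ (neg_nonpos.mpr (by positivity))
      rw [div_le_iff₀ hR0, add_mul, one_mul, div_mul_cancel₀ _ hR0.ne']
      linarith [norm_nonneg x]
    have hw2 : ((1 + ‖x‖) / R) ^ (-(100 * (n:ℝ)))
        = R ^ (100 * (n:ℝ)) * (1 + ‖x‖) ^ (-(100 * (n:ℝ))) := by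
      rw [Real.div_rpow hb1.le hR0.le, Real.rpow_neg hR0.le, div_eq_mul_inv, inv_inv]
      ring
    rw [Real.norm_eq_abs, _root_.abs_of_nonneg (by positivity)]
    calc ‖∑ i : Fin N, Complex.exp (2 * (Real.pi : ℂ) * Complex.I *
          ((∑ j : Fin n, x j * t i ^ (j.1 + 1) : ℝ) : ℂ))‖ ^ (2*s) *
          (1 + ‖x‖ / R) ^ (-(100 * (n:ℝ)))
        ≤ (N:ℝ) ^ (2*s) * (R ^ (100 * (n:ℝ)) * (1 + ‖x‖) ^ (-(100 * (n:ℝ)))) := by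
          refine mul_le_mul (pow_le_pow_left₀ (norm_nonneg _) hnorm _)
            (by rw [← hw2]; exact hw1) (by positivity) (by positivity)
      _ = ((N:ℝ) ^ (2*s) * R ^ (100 * (n:ℝ))) * (1 + ‖x‖) ^ (-(100 * (n:ℝ))) := by ring

/-- Corollary 4.2: if the discrete restriction estimate holds for all choices of
points `t_i ∈ ((i-1)/N, i/N]` and all balls of radius `R ≥ Nⁿ`, then for any
reals `X_i ∈ (i-1, i]` the number of `2s`-tuples satisfying
`|Σ X_{a_j}^i − Σ X_{b_j}^i| ≤ N^{i-n}` for `1 ≤ i ≤ n` is at most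
`C'_ε (N^{s+ε} + N^{2s−n(n+1)/2+ε})`. -/
theorem real_vinogradov_from_discrete_restriction (n s : ℕ) (hn : 2 ≤ n) (hs : 1 ≤ s)
    (H : ∀ ε : ℝ, 0 < ε → ∃ C : ℝ, 0 < C ∧ ∀ N : ℕ, 1 ≤ N →
      ∀ t : Fin N → ℝ, (∀ i : Fin N, (i.1 : ℝ) / N < t i ∧ t i ≤ ((i.1 : ℝ) + 1) / N) →
      ∀ R : ℝ, (N : ℝ) ^ n ≤ R → ∀ c : EuclideanSpace ℝ (Fin n),
        ((volume (ball c R)).toReal⁻¹ *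
          ∫ x : EuclideanSpace ℝ (Fin n),
            ‖∑ i : Fin N, Complex.exp (2 * (Real.pi : ℂ) * Complex.I *
              ((∑ j : Fin n, x j * t i ^ (j.1 + 1) : ℝ) : ℂ))‖ ^ (2 * s : ℝ) *
            (1 + dist x c / R) ^ (-(100 * (n : ℝ)))) ^ (1 / (2 * s : ℝ))
        ≤ C * ((N : ℝ) ^ ((1 : ℝ) / 2 + ε) +
               (N : ℝ) ^ (1 - (n : ℝ) * ((n : ℝ) + 1) / (4 * s) + ε))) :
    ∀ ε : ℝ, 0 < ε → ∃ C' : ℝ, 0 < C' ∧ ∀ N : ℕ, 1 ≤ N →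
      ∀ X : Fin N → ℝ, (∀ i : Fin N, (i.1 : ℝ) < X i ∧ X i ≤ (i.1 : ℝ) + 1) →
        ({p : (Fin s → Fin N) × (Fin s → Fin N) |
            ∀ i : Fin n,
              |(∑ j, X (p.1 j) ^ (i.1 + 1)) - (∑ j, X (p.2 j) ^ (i.1 + 1))|
                ≤ (N : ℝ) ^ (((i.1 : ℝ) + 1) - n)}.ncard : ℝ)
          ≤ C' * ((N : ℝ) ^ ((s : ℝ) + ε) +
                  (N : ℝ) ^ (2 * (s : ℝ) - (n : ℝ) * ((n : ℝ) + 1) / 2 + ε)) := by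
  intro ε hε
  have hs0 : (0:ℝ) < (s:ℝ) := by exact_mod_cast hs
  have hs2 : (0:ℝ) < 2 * (s:ℝ) := by positivity
  obtain ⟨C, hC, hHC⟩ := H (ε / (2 * s)) (by positivity)
  haveI : NeZero n := ⟨by omega⟩
  set K : ℝ := Real.exp ((100 * (n:ℝ)) ^ 2 / (4 * Real.pi)) with hK
  set V1 : ℝ := (volume (ball (0 : EuclideanSpace ℝ (Fin n)) 1)).toReal with hV1
  have hKpos : 0 < K := Real.exp_pos _
  have hV1pos : 0 < V1 := by
    rw [hV1]
    exact ENNReal.toReal_pos (measure_ball_pos volume _ one_pos).ne' measure_ball_lt_top.ne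
  refine ⟨Real.exp (Real.pi * n) * K * V1 * (C ^ (2*s) * 2 ^ (2*s)), by positivity, ?_⟩
  intro N hN X hX
  have hN0 : (0:ℝ) < (N:ℝ) := by exact_mod_cast hN
  have hN1 : (1:ℝ) ≤ (N:ℝ) := by exact_mod_cast hN
  set t : Fin N → ℝ := fun i => X i / N with ht
  have htmem : ∀ i : Fin N, (i.1 : ℝ) / N < t i ∧ t i ≤ ((i.1 : ℝ) + 1) / N := by
    intro i
    simp only [ht]
    exact ⟨(div_lt_div_iff_of_pos_right hN0).mpr (hX i).1, (div_le_div_iff_of_pos_right hN0).mpr (hX i).2⟩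
  set R : ℝ := (N:ℝ) ^ n with hR
  have hR0 : (0:ℝ) < R := by positivity
  have hR1 : (1:ℝ) ≤ R := one_le_pow₀ hN1
  set S := {p : (Fin s → Fin N) × (Fin s → Fin N) |
      ∀ i : Fin n, |(∑ j, X (p.1 j) ^ (i.1 + 1)) - (∑ j, X (p.2 j) ^ (i.1 + 1))|
        ≤ (N : ℝ) ^ (((i.1 : ℝ) + 1) - n)} with hSdef
  have hSfin : S.Finite := Set.toFinite _
  set A : ℝ := (N:ℝ) ^ ((1:ℝ)/2 + ε/(2*s)) with hA
  set B : ℝ := (N:ℝ) ^ (1 - (n:ℝ)*((n:ℝ)+1)/(4*(s:ℝ)) + ε/(2*s)) with hB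
  have hApos : 0 < A := Real.rpow_pos_of_pos hN0 _
  have hBpos : 0 < B := Real.rpow_pos_of_pos hN0 _
  -- the weighted integral (with natural-power integrand)
  set I2 : ℝ := ∫ x : EuclideanSpace ℝ (Fin n),
      ‖∑ i : Fin N, Complex.exp (2 * (Real.pi : ℂ) * Complex.I *
        ((∑ j : Fin n, x j * t i ^ (j.1 + 1) : ℝ) : ℂ))‖ ^ (2 * s) *
        (1 + ‖x‖ / R) ^ (-(100 * (n : ℝ))) with hI2
  have hI2nonneg : 0 ≤ I2 := by
    rw [hI2]
    refine MeasureTheory.integral_nonneg fun x => ?_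
    have : (0:ℝ) < 1 + ‖x‖ / R := by positivity
    positivity
  -- apply the hypothesis
  have hH0 := hHC N hN t htmem R hR.ge (0 : EuclideanSpace ℝ (Fin n))
  have hptw : ∀ x : EuclideanSpace ℝ (Fin n),
      ‖∑ i : Fin N, Complex.exp (2 * (Real.pi : ℂ) * Complex.I *
        ((∑ j : Fin n, x j * t i ^ (j.1 + 1) : ℝ) : ℂ))‖ ^ (2 * (s:ℝ)) *
        (1 + dist x 0 / R) ^ (-(100 * (n : ℝ)))
      = ‖∑ i : Fin N, Complex.exp (2 * (Real.pi : ℂ) * Complex.I *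
        ((∑ j : Fin n, x j * t i ^ (j.1 + 1) : ℝ) : ℂ))‖ ^ (2 * s) *
        (1 + ‖x‖ / R) ^ (-(100 * (n : ℝ))) := by
    intro x
    rw [dist_zero_right]
    congr 1
    rw [show (2 * (s:ℝ)) = ((2*s : ℕ) : ℝ) by push_cast; ring, Real.rpow_natCast]
  rw [MeasureTheory.integral_congr_ae (Filter.Eventually.of_forall hptw)] at hH0
  rw [← hI2] at hH0
  -- volume of the ball
  have hvol : (volume (ball (0 : EuclideanSpace ℝ (Fin n)) R)).toReal = R ^ n * V1 := by
    rw [Measure.addHaar_ball volume (0 : EuclideanSpace ℝ (Fin n)) hR0.le,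
      ENNReal.toReal_mul, ENNReal.toReal_ofReal (by positivity), finrank_euclideanSpace_fin]
  have hvolpos : (0:ℝ) < R ^ n * V1 := by positivity
  -- from hH0 : weighted L^{2s} bound, deduce bound on I2
  have hbase : (0:ℝ) ≤ (volume (ball (0 : EuclideanSpace ℝ (Fin n)) R)).toReal⁻¹ * I2 :=
    mul_nonneg (inv_nonneg.mpr ENNReal.toReal_nonneg) hI2nonneg
  have hMnn : (0:ℝ) ≤ C * (A + B) := by positivity
  have h1 : (volume (ball (0 : EuclideanSpace ℝ (Fin n)) R)).toReal⁻¹ * I2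
      ≤ (C * (A + B)) ^ (2 * s) := by
    have h := Real.rpow_le_rpow (Real.rpow_nonneg hbase _) hH0 hs2.le
    rw [← Real.rpow_mul hbase, one_div, inv_mul_cancel₀ (by positivity : (2*(s:ℝ)) ≠ 0),
      Real.rpow_one] at h
    refine le_of_le_of_eq h ?_
    rw [← Real.rpow_natCast (C * (A + B)) (2*s), hA, hB]
    norm_cast
  have hI2le : I2 ≤ (R ^ n * V1) * (C * (A + B)) ^ (2 * s) := by
    have h2 : (R ^ n * V1)⁻¹ * I2 ≤ (C * (A + B)) ^ (2 * s) := by rwa [hvol] at h1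
    calc I2 = (R ^ n * V1) * ((R ^ n * V1)⁻¹ * I2) := by field_simp
      _ ≤ (R ^ n * V1) * (C * (A + B)) ^ (2 * s) :=
          mul_le_mul_of_nonneg_left h2 hvolpos.le
  -- Gaussian-weighted integral vs weighted integral
  have hI1le : (∫ x : EuclideanSpace ℝ (Fin n),
      ‖∑ i : Fin N, Complex.exp (2 * (Real.pi : ℂ) * Complex.I *
        ((∑ j : Fin n, x j * t i ^ (j.1 + 1) : ℝ) : ℂ))‖ ^ (2 * s) *
        Real.exp (-Real.pi * ‖x‖ ^ 2 / R ^ 2)) ≤ K * I2 := by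
    rw [hI2, ← MeasureTheory.integral_const_mul]
    refine MeasureTheory.integral_mono_of_nonneg
      (Filter.Eventually.of_forall fun x => by positivity)
      (((vin_integrable n s N (by omega) t hR1).const_mul K))
      (Filter.Eventually.of_forall fun x => ?_)
    have hb := vin_exp_bound (u := ‖x‖/R) (m := 100*(n:ℝ)) (by positivity) (by positivity)
    have harg : -Real.pi * ‖x‖ ^ 2 / R ^ 2 = -Real.pi * (‖x‖/R) ^ 2 := by
      field_simp
    beta_reduce
    rw [harg]
    calc ‖∑ i : Fin N, Complex.exp (2 * (Real.pi : ℂ) * Complex.I *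
          ((∑ j : Fin n, x j * t i ^ (j.1 + 1) : ℝ) : ℂ))‖ ^ (2 * s) *
          Real.exp (-Real.pi * (‖x‖/R) ^ 2)
        ≤ ‖∑ i : Fin N, Complex.exp (2 * (Real.pi : ℂ) * Complex.I *
          ((∑ j : Fin n, x j * t i ^ (j.1 + 1) : ℝ) : ℂ))‖ ^ (2 * s) *
          (K * (1 + ‖x‖/R) ^ (-(100 * (n:ℝ)))) :=
          mul_le_mul_of_nonneg_left (by rw [hK]; exact hb) (by positivity)
      _ = K * (‖∑ i : Fin N, Complex.exp (2 * (Real.pi : ℂ) * Complex.I *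
          ((∑ j : Fin n, x j * t i ^ (j.1 + 1) : ℝ) : ℂ))‖ ^ (2 * s) *
          (1 + ‖x‖/R) ^ (-(100 * (n:ℝ)))) := by ring
  -- the Gaussian sum
  set T : ℝ := ∑ p : (Fin s → Fin N) × (Fin s → Fin N),
      Real.exp (-Real.pi * R ^ 2 * ‖vinDelta n N s t p‖ ^ 2) with hT
  have hTid : R ^ n * T = ∫ x : EuclideanSpace ℝ (Fin n),
      ‖∑ i : Fin N, Complex.exp (2 * (Real.pi : ℂ) * Complex.I *
        ((∑ j : Fin n, x j * t i ^ (j.1 + 1) : ℝ) : ℂ))‖ ^ (2 * s) *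
        Real.exp (-Real.pi * ‖x‖ ^ 2 / R ^ 2) := by
    rw [hT, Finset.mul_sum]
    exact (vin_identity n s N t hR0).symm
  have hTle : T ≤ K * V1 * (C * (A + B)) ^ (2 * s) := by
    have hchain : R ^ n * T ≤ R ^ n * (K * V1 * (C * (A + B)) ^ (2 * s)) := by
      rw [hTid]
      calc (∫ x : EuclideanSpace ℝ (Fin n),
          ‖∑ i : Fin N, Complex.exp (2 * (Real.pi : ℂ) * Complex.I *
            ((∑ j : Fin n, x j * t i ^ (j.1 + 1) : ℝ) : ℂ))‖ ^ (2 * s) *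
            Real.exp (-Real.pi * ‖x‖ ^ 2 / R ^ 2))
          ≤ K * I2 := hI1le
        _ ≤ K * ((R ^ n * V1) * (C * (A + B)) ^ (2 * s)) :=
            mul_le_mul_of_nonneg_left hI2le hKpos.le
        _ = R ^ n * (K * V1 * (C * (A + B)) ^ (2 * s)) := by ring
    exact le_of_mul_le_mul_left hchain (by positivity)
  -- per-element lower bound for members of S
  have hmem : ∀ p ∈ S, (1:ℝ) ≤ Real.exp (Real.pi * n) *
      Real.exp (-Real.pi * R ^ 2 * ‖vinDelta n N s t p‖ ^ 2) := by
    intro p hp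
    simp only [hSdef, Set.mem_setOf_eq] at hp
    have hDj : ∀ j : Fin n, |vinDelta n N s t p j| ≤ (N:ℝ) ^ (-(n:ℝ)) := by
      intro j
      have hdelta : vinDelta n N s t p j
          = ((∑ k, X (p.1 k) ^ (j.1 + 1)) - (∑ k, X (p.2 k) ^ (j.1 + 1)))
              / (N:ℝ) ^ (j.1 + 1) := by
        simp only [vinDelta, PiLp.toLp_apply, ht, div_pow, ← Finset.sum_div, sub_div]
      have hPj : (0:ℝ) < (N:ℝ) ^ (j.1 + 1) := by positivity
      rw [hdelta, abs_div, abs_of_pos hPj]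
      have hp' := hp j
      have hQ : (N:ℝ) ^ (((j.1:ℝ)+1) - n) / (N:ℝ) ^ (j.1 + 1) = (N:ℝ) ^ (-(n:ℝ)) := by
        rw [← Real.rpow_natCast (N:ℝ) (j.1 + 1), ← Real.rpow_sub hN0]
        congr 1
        push_cast
        ring
      rw [← hQ]
      gcongr
    have hnorm2 : ‖vinDelta n N s t p‖ ^ 2 ≤ (n:ℝ) * ((N:ℝ) ^ (-(n:ℝ))) ^ 2 := by
      rw [EuclideanSpace.norm_eq, Real.sq_sqrt (Finset.sum_nonneg fun j _ => by positivity)]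
      calc (∑ j : Fin n, ‖vinDelta n N s t p j‖ ^ 2)
          ≤ ∑ j : Fin n, ((N:ℝ) ^ (-(n:ℝ))) ^ 2 := by
            refine Finset.sum_le_sum fun j _ => ?_
            rw [Real.norm_eq_abs]
            exact pow_le_pow_left₀ (abs_nonneg _) (hDj j) 2
        _ = (n:ℝ) * ((N:ℝ) ^ (-(n:ℝ))) ^ 2 := by
            rw [Finset.sum_const, Finset.card_univ, Fintype.card_fin, nsmul_eq_mul]
    have hRN : R * (N:ℝ) ^ (-(n:ℝ)) = 1 := by
      rw [hR, ← Real.rpow_natCast (N:ℝ) n, ← Real.rpow_add hN0]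
      simp
    have hexp : Real.pi * R ^ 2 * ‖vinDelta n N s t p‖ ^ 2 ≤ Real.pi * n := by
      have h3 : R ^ 2 * ‖vinDelta n N s t p‖ ^ 2 ≤ (n:ℝ) := by
        calc R ^ 2 * ‖vinDelta n N s t p‖ ^ 2
            ≤ R ^ 2 * ((n:ℝ) * ((N:ℝ) ^ (-(n:ℝ))) ^ 2) :=
              mul_le_mul_of_nonneg_left hnorm2 (by positivity)
          _ = (n:ℝ) * (R * (N:ℝ) ^ (-(n:ℝ))) ^ 2 := by ring
          _ = (n:ℝ) := by rw [hRN]; ring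
      nlinarith [Real.pi_pos]
    rw [← Real.exp_add]
    rw [show (1:ℝ) = Real.exp 0 from (Real.exp_zero).symm]
    exact Real.exp_le_exp.mpr (by linarith)
  -- counting
  have hcount : ((S.ncard : ℕ) : ℝ) ≤ Real.exp (Real.pi * n) * T := by
    have hcard : ((S.ncard : ℕ) : ℝ) = ∑ _p ∈ hSfin.toFinset, (1:ℝ) := by
      rw [Set.ncard_eq_toFinset_card S hSfin, Finset.sum_const, nsmul_eq_mul, mul_one]
    rw [hcard, hT, Finset.mul_sum]
    calc (∑ _p ∈ hSfin.toFinset, (1:ℝ))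
        ≤ ∑ p ∈ hSfin.toFinset, Real.exp (Real.pi * n) *
            Real.exp (-Real.pi * R ^ 2 * ‖vinDelta n N s t p‖ ^ 2) :=
          Finset.sum_le_sum fun p hpm => hmem p (hSfin.mem_toFinset.mp hpm)
      _ ≤ ∑ p : (Fin s → Fin N) × (Fin s → Fin N), Real.exp (Real.pi * n) *
            Real.exp (-Real.pi * R ^ 2 * ‖vinDelta n N s t p‖ ^ 2) :=
          Finset.sum_le_sum_of_subset_of_nonneg (Finset.subset_univ _)
            (fun p _ _ => by positivity)
  -- exponent arithmetic
  have hA2 : A ^ (2*s) = (N:ℝ) ^ ((s:ℝ) + ε) := by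
    rw [hA, ← Real.rpow_natCast _ (2*s), ← Real.rpow_mul hN0.le]
    congr 1
    push_cast
    field_simp
  have hB2 : B ^ (2*s) = (N:ℝ) ^ (2 * (s:ℝ) - (n:ℝ) * ((n:ℝ) + 1) / 2 + ε) := by
    rw [hB, ← Real.rpow_natCast _ (2*s), ← Real.rpow_mul hN0.le]
    congr 1
    push_cast
    field_simp
    ring
  have hAB : (C * (A + B)) ^ (2*s) ≤ C ^ (2*s) * (2 ^ (2*s) *
      ((N:ℝ) ^ ((s:ℝ) + ε) + (N:ℝ) ^ (2 * (s:ℝ) - (n:ℝ) * ((n:ℝ) + 1) / 2 + ε))) := by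
    rw [mul_pow, ← hA2, ← hB2]
    refine mul_le_mul_of_nonneg_left ?_ (by positivity)
    calc (A + B) ^ (2*s) ≤ 2 ^ (2*s - 1) * (A ^ (2*s) + B ^ (2*s)) :=
          add_pow_le hApos.le hBpos.le (2*s)
      _ ≤ 2 ^ (2*s) * (A ^ (2*s) + B ^ (2*s)) := by
          refine mul_le_mul_of_nonneg_right (pow_le_pow_right₀ one_le_two (by omega)) ?_
          positivity
  calc ((S.ncard : ℕ) : ℝ) ≤ Real.exp (Real.pi * n) * T := hcount
    _ ≤ Real.exp (Real.pi * n) * (K * V1 * (C * (A + B)) ^ (2 * s)) :=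
        mul_le_mul_of_nonneg_left hTle (Real.exp_nonneg _)
    _ ≤ Real.exp (Real.pi * n) * (K * V1 * (C ^ (2*s) * (2 ^ (2*s) *
          ((N:ℝ) ^ ((s:ℝ) + ε) + (N:ℝ) ^ (2 * (s:ℝ) - (n:ℝ) * ((n:ℝ) + 1) / 2 + ε))))) := by
        refine mul_le_mul_of_nonneg_left (mul_le_mul_of_nonneg_left hAB (by positivity))
          (Real.exp_nonneg _)
    _ = Real.exp (Real.pi * n) * K * V1 * (C ^ (2*s) * 2 ^ (2*s)) *
          ((N:ℝ) ^ ((s:ℝ) + ε) + (N:ℝ) ^ (2 * (s:ℝ) - (n:ℝ) * ((n:ℝ) + 1) / 2 + ε)) := by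
        ring
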